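/- Let n₀ be a natural number, and suppose that for every natural number n > n₀ there exists a prime q with q < √(2n) such that 2n − q is also prime. Then for every natural number m with m ≥ √(2n₀) + 1 there exists a prime p with m² < p < (m+1)². -/
import Mathlib

theorem stmt_16 (n₀ : ℕ)
    (H : ∀ n : ℕ, n₀ < n → ∃ q : ℕ, q.Prime ∧ (q : ℝ) < Real.sqrt (2 * n) ∧
        (2 * n - q).Prime)
    (m : ℕ) (hm : Real.sqrt (2 * n₀) + 1 ≤ (m : ℝ)) :
    ∃ p : ℕ, p.Prime ∧ m ^ 2 < p ∧ p < (m + 1) ^ 2 := by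
  have hs0 : (0:ℝ) ≤ Real.sqrt (2 * n₀) := Real.sqrt_nonneg _
  have hm1 : 1 ≤ m := by exact_mod_cast (show (1:ℝ) ≤ (m:ℝ) by linarith)
  obtain ⟨c, hc⟩ := Nat.even_mul_succ_self m
  set n := c + 1 with hn_def
  have h2n : 2 * n = m ^ 2 + m + 2 := by
    have h : m * (m + 1) = m ^ 2 + m := by ring
    omega
  -- n₀ < n
  have hsq0 : Real.sqrt (2 * n₀) ^ 2 = 2 * n₀ := Real.sq_sqrt (by positivity)
  have hle : (2 * n₀ : ℝ) < (m:ℝ) ^ 2 + m + 2 := by nlinarith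
  have hnn : n₀ < n := by
    have : 2 * n₀ < m ^ 2 + m + 2 := by exact_mod_cast hle
    omega
  obtain ⟨q, hq, hqlt, hp⟩ := H n hnn
  have h2nR : (2:ℝ) * n = (m:ℝ) ^ 2 + m + 2 := by exact_mod_cast h2n
  have hmR : (1:ℝ) ≤ (m:ℝ) := by exact_mod_cast hm1
  have hsq : Real.sqrt (2 * n) ≤ (m:ℝ) + 1 := by
    rw [h2nR]
    calc Real.sqrt ((m:ℝ) ^ 2 + m + 2) ≤ Real.sqrt (((m:ℝ) + 1) ^ 2) :=
          Real.sqrt_le_sqrt (by nlinarith)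
      _ = (m:ℝ) + 1 := Real.sqrt_sq (by positivity)
  have hqm : q ≤ m := by
    have : (q:ℝ) < (m:ℝ) + 1 := lt_of_lt_of_le hqlt hsq
    have : q < m + 1 := by exact_mod_cast this
    omega
  have hq2 : 2 ≤ q := hq.two_le
  have hexp : (m + 1) ^ 2 = m ^ 2 + 2 * m + 1 := by ring
  exact ⟨2 * n - q, hp, by omega, by omega⟩
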